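/- Let P be a finite set of points in the plane in general position, consisting of b blue points and r red points. Then there exists a set of at most (2/3)r + 5/3 pairwise disjoint closed triangles such that every blue point lies in the interior of some triangle and no triangle contains a red point. -/

import Mathlib

abbrev Pt := ℝ × ℝ

def GenPos (P : Finset Pt) : Prop :=
  ∀ p ∈ P, ∀ q ∈ P, ∀ r ∈ P, p ≠ q → p ≠ r → q ≠ r → ¬ Collinear ℝ ({p, q, r} : Set Pt)

lemma collinear_det {p q z : Pt} (h : Collinear ℝ ({p, q, z} : Set Pt)) :
    (q.1 - p.1) * (z.2 - p.2) = (q.2 - p.2) * (z.1 - p.1) := by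
  rw [collinear_iff_exists_forall_eq_smul_vadd] at h
  obtain ⟨p₀, v, hv⟩ := h
  obtain ⟨r₁, h₁⟩ := hv p (by simp)
  obtain ⟨r₂, h₂⟩ := hv q (by simp)
  obtain ⟨r₃, h₃⟩ := hv z (by simp)
  have e1 : p.1 = r₁ * v.1 + p₀.1 := by rw [h₁]; rfl
  have e2 : p.2 = r₁ * v.2 + p₀.2 := by rw [h₁]; rfl
  have e3 : q.1 = r₂ * v.1 + p₀.1 := by rw [h₂]; rfl
  have e4 : q.2 = r₂ * v.2 + p₀.2 := by rw [h₂]; rfl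
  have e5 : z.1 = r₃ * v.1 + p₀.1 := by rw [h₃]; rfl
  have e6 : z.2 = r₃ * v.2 + p₀.2 := by rw [h₃]; rfl
  rw [e1, e2, e3, e4, e5, e6]; ring

lemma det_collinear {p q z : Pt}
    (h : (q.1 - p.1) * (z.2 - p.2) = (q.2 - p.2) * (z.1 - p.1)) :
    Collinear ℝ ({p, q, z} : Set Pt) := by
  by_cases hpq : q = p
  · subst hpq
    have : ({q, q, z} : Set Pt) = {q, z} := by ext x; simp [or_comm, or_assoc]
    rw [this]; exact collinear_pair ℝ q z
  rw [collinear_iff_exists_forall_eq_smul_vadd]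
  refine ⟨p, (q.1 - p.1, q.2 - p.2), ?_⟩
  intro x hx
  simp only [Set.mem_insert_iff, Set.mem_singleton_iff] at hx
  rcases hx with rfl | rfl | rfl
  · exact ⟨0, by ext <;> simp⟩
  · exact ⟨1, by ext <;> simp⟩
  · by_cases hq : q.1 - p.1 = 0
    · have hq2 : q.2 - p.2 ≠ 0 := by
        intro h2
        apply hpq; ext
        · linarith
        · linarith
      refine ⟨(x.2 - p.2) / (q.2 - p.2), ?_⟩
      have hz1 : x.1 - p.1 = 0 := by
        rw [hq] at h; simp at h; rcases h with h|h
        · exact absurd h hq2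
        · exact h
      ext
      · show x.1 = _ * (q.1 - p.1) + p.1; rw [hq]; simp; linarith
      · show x.2 = _ * (q.2 - p.2) + p.2; field_simp; ring
    · refine ⟨(x.1 - p.1) / (q.1 - p.1), ?_⟩
      ext
      · show x.1 = _ * (q.1 - p.1) + p.1; field_simp; ring
      · show x.2 = _ * (q.2 - p.2) + p.2
        field_simp
        nlinarith [h]

lemma collinear_image {f : Pt → Pt} (hf : IsLinearMap ℝ f) {s : Set Pt}
    (h : Collinear ℝ s) : Collinear ℝ (f '' s) := by
  rw [collinear_iff_exists_forall_eq_smul_vadd] at h ⊢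
  obtain ⟨p₀, v, hv⟩ := h
  refine ⟨f p₀, f v, ?_⟩
  rintro p ⟨w, hw, rfl⟩
  obtain ⟨r, hr⟩ := hv w hw
  refine ⟨r, ?_⟩
  rw [hr]
  show f (r • v + p₀) = r • f v + f p₀
  rw [hf.map_add, hf.map_smul]

lemma finset_lb (S : Finset Pt) (f : Pt → ℝ) (hf : ∀ z ∈ S, 0 < f z) :
    ∃ ε, 0 < ε ∧ ∀ z ∈ S, ε < f z := by
  rcases S.eq_empty_or_nonempty with rfl | hne
  · exact ⟨1, one_pos, by simp⟩
  · set m := (S.image f).min' (hne.image f) with hm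
    obtain ⟨z₀, hz₀, hz₀m⟩ := Finset.mem_image.1 ((S.image f).min'_mem (hne.image f))
    have hmpos : 0 < m := by rw [hm, ← hz₀m] at *; exact hf z₀ hz₀
    refine ⟨m / 2, by linarith, fun z hz => ?_⟩
    have : m ≤ f z := Finset.min'_le _ _ (Finset.mem_image_of_mem f hz)
    linarith

lemma finset_ub (S : Finset Pt) (f : Pt → ℝ) : ∃ H, 0 < H ∧ ∀ z ∈ S, f z < H := by
  rcases S.eq_empty_or_nonempty with rfl | hne
  · exact ⟨1, one_pos, by simp⟩
  · refine ⟨max 1 ((S.image f).max' (hne.image f) + 1), lt_max_of_lt_left one_pos,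
      fun z hz => ?_⟩
    have : f z ≤ (S.image f).max' (hne.image f) :=
      Finset.le_max' _ _ (Finset.mem_image_of_mem f hz)
    have h2 : f z < (S.image f).max' (hne.image f) + 1 := by linarith
    exact lt_max_of_lt_right h2

lemma combo_mem_hull (A B C : Pt) (u v w : ℝ) (hu : 0 ≤ u) (hv : 0 ≤ v) (hw : 0 ≤ w)
    (huvw : u + v + w = 1) :
    u • A + v • B + w • C ∈ convexHull ℝ ({A, B, C} : Set Pt) := by
  have hA : A ∈ convexHull ℝ ({A, B, C} : Set Pt) := subset_convexHull ℝ _ (by simp)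
  have hB : B ∈ convexHull ℝ ({A, B, C} : Set Pt) := subset_convexHull ℝ _ (by simp)
  have hC : C ∈ convexHull ℝ ({A, B, C} : Set Pt) := subset_convexHull ℝ _ (by simp)
  rcases eq_or_lt_of_le (add_nonneg hu hv) with h0 | hpos
  · have hu0 : u = 0 := by linarith
    have hv0 : v = 0 := by linarith
    have hw1 : w = 1 := by linarith
    simpa [hu0, hv0, hw1] using hC
  · set t := u + v with ht
    have hq : (u / t) • A + (v / t) • B ∈ convexHull ℝ ({A, B, C} : Set Pt) :=
      (convex_convexHull ℝ _) hA hB (div_nonneg hu hpos.le) (div_nonneg hv hpos.le)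
        (by rw [← add_div]; exact div_self (ne_of_gt hpos))
    have := (convex_convexHull ℝ _) hq hC (le_of_lt hpos) hw (by linarith)
    have heq : t • ((u / t) • A + (v / t) • B) + w • C = u • A + v • B + w • C := by
      rw [smul_add, smul_smul, smul_smul]
      have : t * (u / t) = u := by field_simp
      rw [this]
      have : t * (v / t) = v := by field_simp
      rw [this]
    rwa [heq] at this

set_option maxHeartbeats 2000000 in
lemma TRI (S : Finset Pt) (a b α β σ : ℝ) (hab : a < b) (hσ : σ * σ = 1)
    (hS : ∀ z ∈ S, a < z.1 ∧ z.1 < b ∧ 0 < σ * (z.2 - (α * z.1 + β))) :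
    ∃ s : Finset Pt, s.card = 3 ∧ ¬ Collinear ℝ (↑s : Set Pt) ∧
      (∀ z ∈ S, z ∈ interior (convexHull ℝ (↑s : Set Pt))) ∧
      (∀ z ∈ convexHull ℝ (↑s : Set Pt), a ≤ z.1 ∧ z.1 ≤ b ∧
        0 < σ * (z.2 - (α * z.1 + β))) := by
  have hσ0 : σ ≠ 0 := by intro h; rw [h] at hσ; norm_num at hσ
  obtain ⟨ε, hε, hεlt⟩ := finset_lb S (fun z => σ * (z.2 - (α * z.1 + β)))
    (fun z hz => (hS z hz).2.2)
  obtain ⟨δ, hδ, hδlt⟩ := finset_lb S (fun z => min (z.1 - a) (b - z.1))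
    (fun z hz => lt_min (by linarith [(hS z hz).1]) (by linarith [(hS z hz).2.1]))
  obtain ⟨H, hH, hHlt⟩ := finset_ub S (fun z => σ * (z.2 - (α * z.1 + β)))
  have hba : (0:ℝ) < b - a := by linarith
  set M : ℝ := ε + H * (b - a) / δ + H with hM
  have hMε : 0 < M - ε := by
    have : 0 < H * (b - a) / δ := div_pos (mul_pos hH hba) hδ
    simp only [hM]; linarith
  set c0 : ℝ := (a + b) / 2 with hc0
  set A : Pt := (a, α * a + β + σ * ε) with hA
  set Bv : Pt := (b, α * b + β + σ * ε) with hBv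
  set C : Pt := (c0, α * c0 + β + σ * M) with hC
  -- coefficient functions
  set wf : Pt → ℝ := fun p => (σ * (p.2 - (α * p.1 + β)) - ε) * (M - ε)⁻¹ with hwf
  set uf : Pt → ℝ := fun p => (b - p.1 - wf p * (b - a) / 2) * (b - a)⁻¹ with huf
  set vf : Pt → ℝ := fun p => (p.1 - a - wf p * (b - a) / 2) * (b - a)⁻¹ with hvf
  have hsum : ∀ p : Pt, uf p + vf p + wf p = 1 := by
    intro p
    simp only [huf, hvf, hwf]
    field_simp
    ring
  have hσ1 : σ = 1 ∨ σ = -1 := mul_self_eq_one_iff.mp hσ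
  have hcombo : ∀ p : Pt, uf p • A + vf p • Bv + wf p • C = p := by
    intro p
    refine Prod.ext ?_ ?_
    · simp only [hA, hBv, hC, huf, hvf, hwf, Prod.fst_add, Prod.smul_fst, smul_eq_mul, hc0]
      field_simp
      ring
    · rcases hσ1 with rfl | rfl <;>
      · simp only [hA, hBv, hC, huf, hvf, hwf, Prod.snd_add, Prod.smul_snd, smul_eq_mul, hc0]
        field_simp
        ring
  -- the triangle
  set s : Finset Pt := {A, Bv, C} with hs
  have hc0a : a < c0 := by rw [hc0]; linarith
  have hc0b : c0 < b := by rw [hc0]; linarith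
  have hA1 : A.1 = a := rfl
  have hB1 : Bv.1 = b := rfl
  have hC1 : C.1 = c0 := rfl
  have hAB : A ≠ Bv := fun h => by rw [h] at hA1; rw [hB1] at hA1; linarith
  have hAC : A ≠ C := fun h => by rw [h] at hA1; rw [hC1] at hA1; linarith
  have hBC : Bv ≠ C := fun h => by rw [h] at hB1; rw [hC1] at hB1; linarith
  have hcard : s.card = 3 := by
    rw [hs]
    rw [Finset.card_insert_of_notMem (by simp [hAB, hAC]),
      Finset.card_insert_of_notMem (by simp [hBC])]
    rfl
  have hcoe : (↑s : Set Pt) = {A, Bv, C} := by rw [hs]; simp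
  -- noncollinearity
  have hncol : ¬ Collinear ℝ (↑s : Set Pt) := by
    rw [hcoe]
    intro h
    have hdet := collinear_det h
    simp only [hA, hBv, hC, hc0] at hdet
    have h0 : (b - a) * (M - ε) = 0 := by
      rcases hσ1 with rfl | rfl
      · linear_combination hdet
      · linear_combination -hdet
    nlinarith [mul_pos hba hMε]
  -- hull is inside the region
  have hconv : Convex ℝ {z : Pt | a ≤ z.1 ∧ z.1 ≤ b ∧ 0 < σ * (z.2 - (α * z.1 + β))} := by
    intro x hx y hy u v hu hv huv
    obtain ⟨hx1, hx2, hx3⟩ := hx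
    obtain ⟨hy1, hy2, hy3⟩ := hy
    have h1 : (u • x + v • y).1 = u * x.1 + v * y.1 := rfl
    have h2 : (u • x + v • y).2 = u * x.2 + v * y.2 := rfl
    have e1 : u * a + v * a = a := by linear_combination a * huv
    have e2 : u * b + v * b = b := by linear_combination b * huv
    refine ⟨?_, ?_, ?_⟩
    · rw [h1]; linarith [mul_nonneg hu (sub_nonneg.2 hx1), mul_nonneg hv (sub_nonneg.2 hy1)]
    · rw [h1]; linarith [mul_nonneg hu (sub_nonneg.2 (hx2 : x.1 ≤ b)), mul_nonneg hv (sub_nonneg.2 hy2)]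
    · rw [h1, h2]
      have hkey : σ * ((u * x.2 + v * y.2) - (α * (u * x.1 + v * y.1) + β))
          = u * (σ * (x.2 - (α * x.1 + β))) + v * (σ * (y.2 - (α * y.1 + β))) := by
        linear_combination (σ * β) * huv
      rw [hkey]
      rcases eq_or_lt_of_le hu with h0 | hup
      · have hv1 : v = 1 := by linarith
        rw [← h0, hv1]; simpa using hy3
      · linarith [mul_pos hup hx3, mul_nonneg hv (le_of_lt hy3)]
  have hvert : ({A, Bv, C} : Set Pt) ⊆
      {z : Pt | a ≤ z.1 ∧ z.1 ≤ b ∧ 0 < σ * (z.2 - (α * z.1 + β))} := by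
    have hMpos : 0 < M := by
      have : 0 < H * (b - a) / δ := div_pos (mul_pos hH hba) hδ
      rw [hM]; linarith
    intro z hz
    simp only [Set.mem_insert_iff, Set.mem_singleton_iff] at hz
    rcases hz with rfl | rfl | rfl
    · refine ⟨le_refl _, hab.le, ?_⟩
      have he : σ * (A.2 - (α * A.1 + β)) = ε := by
        show σ * (α * a + β + σ * ε - (α * a + β)) = ε
        linear_combination ε * hσ
      rw [show A.1 = a from rfl] at he ⊢
      rw [he]; exact hε
    · refine ⟨hab.le, le_refl _, ?_⟩
      have he : σ * (Bv.2 - (α * Bv.1 + β)) = ε := by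
        show σ * (α * b + β + σ * ε - (α * b + β)) = ε
        linear_combination ε * hσ
      rw [show Bv.1 = b from rfl] at he ⊢
      rw [he]; exact hε
    · refine ⟨hc0a.le, hc0b.le, ?_⟩
      have he : σ * (C.2 - (α * C.1 + β)) = M := by
        show σ * (α * c0 + β + σ * M - (α * c0 + β)) = M
        linear_combination M * hσ
      rw [show C.1 = c0 from rfl] at he ⊢
      rw [he]; exact hMpos
  have hsub : convexHull ℝ (↑s : Set Pt) ⊆
      {z : Pt | a ≤ z.1 ∧ z.1 ≤ b ∧ 0 < σ * (z.2 - (α * z.1 + β))} := by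
    rw [hcoe]; exact convexHull_min hvert hconv
  -- interior membership
  clear_value wf uf vf M c0 A Bv C s
  have hMε' : (M - ε)⁻¹ > 0 := inv_pos.2 hMε
  have hba' : (b - a)⁻¹ > 0 := inv_pos.2 hba
  have hUopen : IsOpen ({p : Pt | 0 < uf p} ∩ ({p : Pt | 0 < vf p} ∩ {p : Pt | 0 < wf p})) := by
    have hcw : Continuous wf := by rw [hwf]; fun_prop
    have hcu : Continuous uf := by rw [huf]; fun_prop
    have hcv : Continuous vf := by rw [hvf]; fun_prop
    exact ((isOpen_lt continuous_const hcu).inter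
      ((isOpen_lt continuous_const hcv).inter (isOpen_lt continuous_const hcw)))
  have hUsub : ({p : Pt | 0 < uf p} ∩ ({p : Pt | 0 < vf p} ∩ {p : Pt | 0 < wf p}))
      ⊆ convexHull ℝ (↑s : Set Pt) := by
    rintro p ⟨h1, h2, h3⟩
    have := combo_mem_hull A Bv C (uf p) (vf p) (wf p) h1.le h2.le h3.le (hsum p)
    rw [hcombo p] at this
    rwa [hcoe]
  have hmem : ∀ z ∈ S, z ∈ interior (convexHull ℝ (↑s : Set Pt)) := by
    intro z hz
    have hY := hεlt z hz
    have hYH := hHlt z hz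
    have hδz := hδlt z hz
    rw [lt_min_iff] at hδz
    have hwz : 0 < wf z := by
      simp only [hwf]
      exact mul_pos (by linarith) hMε'
    have hδM : δ * (M - ε) = H * (b - a) + δ * H := by
      rw [hM]; field_simp; ring
    have hkey : wf z * (b - a) < δ := by
      simp only [hwf]
      rw [show (σ * (z.2 - (α * z.1 + β)) - ε) * (M - ε)⁻¹ * (b - a)
          = ((σ * (z.2 - (α * z.1 + β)) - ε) * (b - a)) / (M - ε) by ring]
      rw [div_lt_iff₀ hMε]
      nlinarith [mul_pos hδ hH]
    have hwba : 0 ≤ wf z * (b - a) := le_of_lt (mul_pos hwz hba)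
    have huz : 0 < uf z := by
      simp only [huf]
      have : 0 < b - z.1 - wf z * (b - a) / 2 := by
        have h5 := hδz.2
        linarith
      exact mul_pos this hba'
    have hvz : 0 < vf z := by
      simp only [hvf]
      have : 0 < z.1 - a - wf z * (b - a) / 2 := by
        have h5 := hδz.1
        linarith
      exact mul_pos this hba'
    exact interior_maximal hUsub hUopen ⟨huz, hvz, hwz⟩
  exact ⟨s, hcard, hncol, hmem, fun z hz => hsub hz⟩

lemma TWO (S : Finset Pt) (a b α β : ℝ) (hab : a < b)
    (hS : ∀ z ∈ S, a < z.1 ∧ z.1 < b ∧ z.2 ≠ α * z.1 + β) :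
    ∃ T : Finset (Finset Pt), T.card ≤ 2 ∧
      (∀ s ∈ T, s.card = 3 ∧ ¬ Collinear ℝ (↑s : Set Pt)) ∧
      (∀ s ∈ T, ∀ s' ∈ T, s ≠ s' →
        Disjoint (interior (convexHull ℝ (↑s : Set Pt)))
                 (interior (convexHull ℝ (↑s' : Set Pt)))) ∧
      (∀ z ∈ S, ∃ s ∈ T, z ∈ interior (convexHull ℝ (↑s : Set Pt))) ∧
      (∀ s ∈ T, ∀ z ∈ convexHull ℝ (↑s : Set Pt), a ≤ z.1 ∧ z.1 ≤ b ∧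
        z.2 ≠ α * z.1 + β) := by
  obtain ⟨s₁, hs₁card, hs₁col, hs₁mem, hs₁reg⟩ :=
    TRI (S.filter (fun z => α * z.1 + β < z.2)) a b α β 1 hab (by norm_num)
      (fun z hz => by
        obtain ⟨h1, h2⟩ := Finset.mem_filter.1 hz
        exact ⟨(hS z h1).1, (hS z h1).2.1, by rw [one_mul]; linarith⟩)
  obtain ⟨s₂, hs₂card, hs₂col, hs₂mem, hs₂reg⟩ :=
    TRI (S.filter (fun z => z.2 < α * z.1 + β)) a b α β (-1) hab (by norm_num)
      (fun z hz => by
        obtain ⟨h1, h2⟩ := Finset.mem_filter.1 hz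
        exact ⟨(hS z h1).1, (hS z h1).2.1, by simp only [neg_one_mul]; linarith⟩)
  refine ⟨{s₁, s₂}, ?_, ?_, ?_, ?_, ?_⟩
  · exact le_trans (Finset.card_insert_le _ _) (by simp)
  · intro s hs
    rcases Finset.mem_insert.1 hs with rfl | hs
    · exact ⟨hs₁card, hs₁col⟩
    · rw [Finset.mem_singleton.1 hs]; exact ⟨hs₂card, hs₂col⟩
  · have hd : Disjoint (interior (convexHull ℝ (↑s₁ : Set Pt)))
        (interior (convexHull ℝ (↑s₂ : Set Pt))) := by
      rw [Set.disjoint_left]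
      intro z hz1 hz2
      have h1 := (hs₁reg z (interior_subset hz1)).2.2
      have h2 := (hs₂reg z (interior_subset hz2)).2.2
      rw [one_mul] at h1
      simp only [neg_one_mul] at h2
      linarith
    intro s hs s' hs' hne
    rcases Finset.mem_insert.1 hs with rfl | hs <;>
      rcases Finset.mem_insert.1 hs' with h' | h'
    · exact absurd h'.symm hne
    · rw [Finset.mem_singleton.1 h']; exact hd
    · rw [Finset.mem_singleton.1 hs, h']; exact hd.symm
    · rw [Finset.mem_singleton.1 hs, Finset.mem_singleton.1 h'] at hne
      exact absurd rfl hne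
  · intro z hz
    rcases lt_or_gt_of_ne (hS z hz).2.2 with h | h
    · exact ⟨s₂, Finset.mem_insert.2 (Or.inr (Finset.mem_singleton_self _)),
        hs₂mem z (Finset.mem_filter.2 ⟨hz, h⟩)⟩
    · exact ⟨s₁, Finset.mem_insert_self _ _, hs₁mem z (Finset.mem_filter.2 ⟨hz, h⟩)⟩
  · intro s hs z hz
    rcases Finset.mem_insert.1 hs with rfl | hs
    · obtain ⟨h1, h2, h3⟩ := hs₁reg z hz
      rw [one_mul] at h3
      exact ⟨h1, h2, by intro h; rw [h] at h3; linarith⟩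
    · rw [Finset.mem_singleton.1 hs] at hz
      obtain ⟨h1, h2, h3⟩ := hs₂reg z hz
      simp only [neg_one_mul] at h3
      exact ⟨h1, h2, by intro h; rw [h] at h3; linarith⟩

lemma line_through (p q : Pt) (hne : p.1 ≠ q.1) :
    ∃ α β : ℝ, p.2 = α * p.1 + β ∧ q.2 = α * q.1 + β := by
  refine ⟨(q.2 - p.2) / (q.1 - p.1), p.2 - (q.2 - p.2) / (q.1 - p.1) * p.1, by ring, ?_⟩
  have h : q.1 - p.1 ≠ 0 := sub_ne_zero.2 (Ne.symm hne)
  field_simp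
  ring

lemma MAIN (n : ℕ) : ∀ (B R : Finset Pt) (ℓ : ℝ), R.card = n →
    Disjoint B R →
    (∀ p ∈ B ∪ R, ∀ q ∈ B ∪ R, p.1 = q.1 → p = q) →
    (∀ p ∈ R, ∀ q ∈ R, p ≠ q → ∀ z ∈ B,
      (q.1 - p.1) * (z.2 - p.2) ≠ (q.2 - p.2) * (z.1 - p.1)) →
    (∀ p ∈ B ∪ R, ℓ < p.1) →
    ∃ T : Finset (Finset Pt),
      3 * T.card ≤ 2 * n + 5 ∧
      (∀ s ∈ T, s.card = 3 ∧ ¬ Collinear ℝ (↑s : Set Pt)) ∧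
      (∀ s ∈ T, ∀ s' ∈ T, s ≠ s' →
        Disjoint (interior (convexHull ℝ (↑s : Set Pt)))
                 (interior (convexHull ℝ (↑s' : Set Pt)))) ∧
      (∀ p ∈ B, ∃ s ∈ T, p ∈ interior (convexHull ℝ (↑s : Set Pt))) ∧
      (∀ s ∈ T, ∀ r ∈ R, r ∉ convexHull ℝ (↑s : Set Pt)) ∧
      (∀ s ∈ T, ∀ z ∈ convexHull ℝ (↑s : Set Pt), ℓ < z.1) := by
  induction n using Nat.strong_induction_on with
  | _ n ih =>
  intro B R ℓ hcard hBR hinj hdet hℓ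
  by_cases hBne : (B ∪ R).Nonempty
  case neg =>
    -- no points at all
    refine ⟨∅, by simp, by simp, by simp, ?_, by simp, by simp⟩
    intro p hp
    exact absurd (Finset.mem_union_left R hp) (fun h => hBne ⟨p, h⟩)
  case pos =>
  set xmin : ℝ := ((B ∪ R).image Prod.fst).min' (hBne.image _) with hxmin
  have hxminlt : ℓ < xmin := by
    obtain ⟨p, hp, hpx⟩ := Finset.mem_image.1 (((B ∪ R).image Prod.fst).min'_mem (hBne.image _))
    rw [hxmin, ← hpx]
    exact hℓ p hp
  have hxminle : ∀ p ∈ B ∪ R, xmin ≤ p.1 := fun p hp =>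
    Finset.min'_le _ _ (Finset.mem_image_of_mem _ hp)
  set a : ℝ := (ℓ + xmin) / 2 with ha
  have haℓ : ℓ < a := by rw [ha]; linarith
  have haxmin : a < xmin := by rw [ha]; linarith
  rcases lt_or_ge n 3 with hn3 | hn3
  · -- few red points: one slab
    set xmax : ℝ := ((B ∪ R).image Prod.fst).max' (hBne.image _) with hxmax
    have hxmaxge : ∀ p ∈ B ∪ R, p.1 ≤ xmax := fun p hp =>
      Finset.le_max' _ _ (Finset.mem_image_of_mem _ hp)
    set b : ℝ := xmax + 1 with hb
    have hab : a < b := by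
      rw [hb]
      obtain ⟨p, hp⟩ := hBne
      have := hxminle p hp
      have := hxmaxge p hp
      linarith
    rcases Nat.lt_or_ge n 1 with hn0 | hn1
    · -- no red points: a single triangle suffices
      interval_cases n
      have hR : R = ∅ := Finset.card_eq_zero.1 hcard
      by_cases hB : B.Nonempty
      · set ymin : ℝ := (B.image Prod.snd).min' (hB.image _) with hymin
        have hyminle : ∀ z ∈ B, ymin ≤ z.2 := fun z hz =>
          Finset.min'_le _ _ (Finset.mem_image_of_mem _ hz)
        obtain ⟨s, hscard, hscol, hsmem, hsreg⟩ :=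
          TRI B a b 0 (ymin - 1) 1 hab (by norm_num)
            (fun z hz => ⟨lt_of_lt_of_le haxmin (hxminle z (Finset.mem_union_left R hz)),
              by have := hxmaxge z (Finset.mem_union_left R hz); rw [hb]; linarith,
              by have := hyminle z hz; simp; linarith⟩)
        refine ⟨{s}, by simp, ?_, ?_, ?_, by simp [hR], ?_⟩
        · intro t ht; rw [Finset.mem_singleton.1 ht]; exact ⟨hscard, hscol⟩
        · intro t ht t' ht' hne
          rw [Finset.mem_singleton.1 ht, Finset.mem_singleton.1 ht'] at hne
          exact absurd rfl hne
        · exact fun p hp => ⟨s, Finset.mem_singleton_self s, hsmem p hp⟩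
        · intro t ht z hz
          rw [Finset.mem_singleton.1 ht] at hz
          exact lt_of_lt_of_le haℓ (hsreg z hz).1
      · rw [Finset.not_nonempty_iff_eq_empty] at hB
        refine ⟨∅, by simp, by simp, by simp, by simp [hB], by simp, by simp⟩
    -- get a line through all red points missing all blue points
    have hlineex : ∃ α β : ℝ, (∀ r ∈ R, r.2 = α * r.1 + β) ∧
        (∀ z ∈ B, z.2 ≠ α * z.1 + β) := by
      rcases Nat.lt_or_ge n 2 with hn1' | hn2
      · -- one red
        interval_cases n
        obtain ⟨p, hp⟩ := Finset.card_eq_one.1 hcard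
        have hpR : p ∈ R := by rw [hp]; exact Finset.mem_singleton_self p
        obtain ⟨α, hα⟩ := Infinite.exists_notMem_finset
          (B.image (fun z => (z.2 - p.2) / (z.1 - p.1)))
        refine ⟨α, p.2 - α * p.1, ?_, ?_⟩
        · intro r hr; rw [hp, Finset.mem_singleton] at hr; rw [hr]; ring
        · intro z hz h
          have hzp : z ≠ p := fun he => (Finset.disjoint_left.1 hBR hz) (he ▸ hpR)
          have hzx : z.1 ≠ p.1 := fun he =>
            hzp (hinj z (Finset.mem_union_left R hz) p (Finset.mem_union_right B hpR) he)
          apply hα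
          refine Finset.mem_image.2 ⟨z, hz, ?_⟩
          have h1 : z.1 - p.1 ≠ 0 := sub_ne_zero.2 hzx
          field_simp
          linarith [h]
      · -- two reds
        interval_cases n
        obtain ⟨p, q, hpq, hR2⟩ := Finset.card_eq_two.1 hcard
        have hpR : p ∈ R := by rw [hR2]; simp
        have hqR : q ∈ R := by rw [hR2]; simp
        have hpqx : p.1 ≠ q.1 := fun he => hpq
          (hinj p (Finset.mem_union_right B hpR) q (Finset.mem_union_right B hqR) he)
        obtain ⟨α, β, hpl, hql⟩ := line_through p q hpqx
        refine ⟨α, β, ?_, ?_⟩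
        · intro r hr; rw [hR2] at hr
          rcases Finset.mem_insert.1 hr with rfl | hr
          · exact hpl
          · rw [Finset.mem_singleton.1 hr]; exact hql
        · intro z hz h
          apply hdet p hpR q hqR hpq z hz
          rw [hpl, hql, h]; ring
    obtain ⟨α, β, hred, hblue⟩ := hlineex
    obtain ⟨T, hTcard, hTshape, hTdisj, hTcover, hTreg⟩ := TWO B a b α β hab
      (fun z hz => ⟨lt_of_lt_of_le haxmin (hxminle z (Finset.mem_union_left R hz)),
        by have := hxmaxge z (Finset.mem_union_left R hz); rw [hb]; linarith,
        hblue z hz⟩)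
    refine ⟨T, by omega, hTshape, hTdisj,
      fun p hp => hTcover p hp, ?_, ?_⟩
    · intro s hs r hr hmem
      exact (hTreg s hs r hmem).2.2 (hred r hr)
    · intro s hs z hz
      exact lt_of_lt_of_le haℓ (hTreg s hs z hz).1
  · -- main inductive step: at least 3 reds
    have hRne : R.Nonempty := Finset.card_pos.1 (by omega)
    obtain ⟨q1, hq1R, hq1min⟩ := R.exists_min_image Prod.fst hRne
    have hR1ne : (R.erase q1).Nonempty := by
      rw [← Finset.card_pos, Finset.card_erase_of_mem hq1R]; omega
    obtain ⟨q2, hq2R1, hq2min⟩ := (R.erase q1).exists_min_image Prod.fst hR1ne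
    have hq2R : q2 ∈ R := Finset.mem_of_mem_erase hq2R1
    have hq2q1 : q2 ≠ q1 := Finset.ne_of_mem_erase hq2R1
    have hR2ne : ((R.erase q1).erase q2).Nonempty := by
      rw [← Finset.card_pos, Finset.card_erase_of_mem hq2R1,
        Finset.card_erase_of_mem hq1R]; omega
    obtain ⟨q3, hq3R2, hq3min⟩ := ((R.erase q1).erase q2).exists_min_image Prod.fst hR2ne
    have hq3R1 : q3 ∈ R.erase q1 := Finset.mem_of_mem_erase hq3R2
    have hq3R : q3 ∈ R := Finset.mem_of_mem_erase hq3R1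
    have hq3q2 : q3 ≠ q2 := Finset.ne_of_mem_erase hq3R2
    have hq3q1 : q3 ≠ q1 := Finset.ne_of_mem_erase hq3R1
    have hunion : ∀ r ∈ R, r ∈ B ∪ R := fun r hr => Finset.mem_union_right B hr
    have hnex : ∀ p ∈ B ∪ R, ∀ q ∈ B ∪ R, p ≠ q → p.1 ≠ q.1 :=
      fun p hp q hq hpq he => hpq (hinj p hp q hq he)
    have hq12x : q1.1 < q2.1 :=
      lt_of_le_of_ne (hq1min q2 hq2R) (hnex q1 (hunion q1 hq1R) q2 (hunion q2 hq2R) hq2q1.symm)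
    have hq23x : q2.1 < q3.1 :=
      lt_of_le_of_ne (hq2min q3 hq3R1) (hnex q2 (hunion q2 hq2R) q3 (hunion q3 hq3R) hq3q2.symm)
    have hq3lt : ∀ r ∈ R, r ≠ q1 → r ≠ q2 → r ≠ q3 → q3.1 < r.1 := by
      intro r hr h1 h2 h3
      have hrR2 : r ∈ (R.erase q1).erase q2 :=
        Finset.mem_erase.2 ⟨h2, Finset.mem_erase.2 ⟨h1, hr⟩⟩
      exact lt_of_le_of_ne (hq3min r hrR2) (hnex q3 (hunion q3 hq3R) r (hunion r hr) (Ne.symm h3))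
    -- the group slab
    set P3 : Finset Pt := (B ∪ R).filter (fun p => p.1 < q3.1) with hP3
    have hq1P3 : q1 ∈ P3 := Finset.mem_filter.2 ⟨hunion q1 hq1R, by linarith⟩
    have hP3ne : P3.Nonempty := ⟨q1, hq1P3⟩
    set m : ℝ := (P3.image Prod.fst).max' (hP3ne.image _) with hm
    have hmge : ∀ p ∈ P3, p.1 ≤ m := fun p hp =>
      Finset.le_max' _ _ (Finset.mem_image_of_mem _ hp)
    have hmlt : m < q3.1 := by
      obtain ⟨p, hp, hpx⟩ := Finset.mem_image.1 ((P3.image Prod.fst).max'_mem (hP3ne.image _))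
      rw [hm, ← hpx]
      exact (Finset.mem_filter.1 hp).2
    set b : ℝ := (m + q3.1) / 2 with hb
    have hmb : m < b := by rw [hb]; linarith
    have hbq3 : b < q3.1 := by rw [hb]; linarith
    have hab : a < b := by
      have := hxminle q1 (hunion q1 hq1R)
      have := hmge q1 hq1P3
      linarith
    have hq12ne : q1.1 ≠ q2.1 := ne_of_lt hq12x
    obtain ⟨α, β, hl1, hl2⟩ := line_through q1 q2 hq12ne
    set Bg : Finset Pt := B.filter (fun z => z.1 < q3.1) with hBg
    obtain ⟨Tg, hTgcard, hTgshape, hTgdisj, hTgcover, hTgreg⟩ := TWO Bg a b α β hab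
      (fun z hz => by
        obtain ⟨hzB, hzx⟩ := Finset.mem_filter.1 hz
        refine ⟨lt_of_lt_of_le haxmin (hxminle z (Finset.mem_union_left R hzB)), ?_, ?_⟩
        · have : z ∈ P3 := Finset.mem_filter.2 ⟨Finset.mem_union_left R hzB, hzx⟩
          have := hmge z this
          linarith
        · intro h
          apply hdet q1 hq1R q2 hq2R hq2q1.symm z hzB
          rw [hl1, hl2, h]; ring)
    -- recursive part
    set B' : Finset Pt := B.filter (fun z => q3.1 < z.1) with hB'
    set R' : Finset Pt := R.filter (fun r => q3.1 < r.1) with hR'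
    have hR'eq : R' = ((R.erase q1).erase q2).erase q3 := by
      ext r
      simp only [hR', Finset.mem_filter, Finset.mem_erase]
      constructor
      · rintro ⟨hr, hrx⟩
        refine ⟨fun he => ?_, fun he => ?_, fun he => ?_, hr⟩
        · rw [he] at hrx; linarith
        · rw [he] at hrx; linarith
        · rw [he] at hrx; linarith [hq12x, hq23x]
      · rintro ⟨h3, h1, h2, hr⟩
        exact ⟨hr, hq3lt r hr h2 h1 h3⟩
    have hR'card : R'.card = n - 3 := by
      rw [hR'eq, Finset.card_erase_of_mem hq3R2, Finset.card_erase_of_mem hq2R1,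
        Finset.card_erase_of_mem hq1R, hcard]
      omega
    have hsub' : ∀ p ∈ B' ∪ R', p ∈ B ∪ R := by
      intro p hp
      rcases Finset.mem_union.1 hp with h | h
      · exact Finset.mem_union_left R (Finset.mem_of_mem_filter p h)
      · exact Finset.mem_union_right B (Finset.mem_of_mem_filter p h)
    have hgt' : ∀ p ∈ B' ∪ R', q3.1 < p.1 := by
      intro p hp
      rcases Finset.mem_union.1 hp with h | h
      · exact (Finset.mem_filter.1 h).2
      · exact (Finset.mem_filter.1 h).2
    obtain ⟨ℓ', hℓ'q3, hℓ'pts⟩ : ∃ ℓ', q3.1 < ℓ' ∧ ∀ p ∈ B' ∪ R', ℓ' < p.1 := by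
      by_cases hS' : (B' ∪ R').Nonempty
      · set m' : ℝ := ((B' ∪ R').image Prod.fst).min' (hS'.image _) with hm'
        have hm'gt : q3.1 < m' := by
          obtain ⟨p, hp, hpx⟩ :=
            Finset.mem_image.1 (((B' ∪ R').image Prod.fst).min'_mem (hS'.image _))
          rw [hm', ← hpx]
          exact hgt' p hp
        refine ⟨(q3.1 + m') / 2, by linarith, fun p hp => ?_⟩
        have : m' ≤ p.1 := Finset.min'_le _ _ (Finset.mem_image_of_mem _ hp)
        linarith
      · exact ⟨q3.1 + 1, by linarith, fun p hp => absurd ⟨p, hp⟩ hS'⟩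
    obtain ⟨T', hT'card, hT'shape, hT'disj, hT'cover, hT'red, hT'conf⟩ :=
      ih (n - 3) (by omega) B' R' ℓ' hR'card
        (hBR.mono (Finset.filter_subset _ B) (Finset.filter_subset _ R))
        (fun p hp q hq => hinj p (hsub' p hp) q (hsub' q hq))
        (fun p hp q hq hpq z hz => hdet p (Finset.mem_of_mem_filter p hp)
          q (Finset.mem_of_mem_filter q hq) hpq z (Finset.mem_of_mem_filter z hz))
        hℓ'pts
    have hbℓ' : b < ℓ' := by linarith
    refine ⟨Tg ∪ T', ?_, ?_, ?_, ?_, ?_, ?_⟩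
    · -- counting
      have h1 := Finset.card_union_le Tg T'
      omega
    · intro s hs
      rcases Finset.mem_union.1 hs with h | h
      · exact hTgshape s h
      · exact hT'shape s h
    · -- pairwise disjoint interiors
      have hcross : ∀ s ∈ Tg, ∀ s' ∈ T',
          Disjoint (interior (convexHull ℝ (↑s : Set Pt)))
            (interior (convexHull ℝ (↑s' : Set Pt))) := by
        intro s hs s' hs'
        rw [Set.disjoint_left]
        intro z hz1 hz2
        have h1 := (hTgreg s hs z (interior_subset hz1)).2.1
        have h2 := hT'conf s' hs' z (interior_subset hz2)
        linarith
      intro s hs s' hs' hne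
      rcases Finset.mem_union.1 hs with h | h <;> rcases Finset.mem_union.1 hs' with h' | h'
      · exact hTgdisj s h s' h' hne
      · exact hcross s h s' h'
      · exact (hcross s' h' s h).symm
      · exact hT'disj s h s' h' hne
    · -- blue points covered
      intro p hp
      rcases lt_trichotomy p.1 q3.1 with h | h | h
      · obtain ⟨s, hs, hmem⟩ := hTgcover p (Finset.mem_filter.2 ⟨hp, h⟩)
        exact ⟨s, Finset.mem_union_left _ hs, hmem⟩
      · exfalso
        have : p = q3 := hinj p (Finset.mem_union_left R hp) q3 (hunion q3 hq3R) h
        exact (Finset.disjoint_left.1 hBR hp) (this ▸ hq3R)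
      · obtain ⟨s, hs, hmem⟩ := hT'cover p (Finset.mem_filter.2 ⟨hp, h⟩)
        exact ⟨s, Finset.mem_union_right _ hs, hmem⟩
    · -- no red point inside
      intro s hs r hr hmem
      rcases Finset.mem_union.1 hs with h | h
      · obtain ⟨hra, hrb, hrl⟩ := hTgreg s h r hmem
        by_cases h1 : r = q1
        · rw [h1] at hrl; exact hrl hl1
        by_cases h2 : r = q2
        · rw [h2] at hrl; exact hrl hl2
        by_cases h3 : r = q3
        · rw [h3] at hrb; linarith
        · have := hq3lt r hr h1 h2 h3
          linarith
      · by_cases hrR' : r ∈ R'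
        · exact hT'red s h r hrR' hmem
        · have hrx : ¬ q3.1 < r.1 := fun hc => hrR' (Finset.mem_filter.2 ⟨hr, hc⟩)
          have := hT'conf s h r hmem
          push_neg at hrx
          linarith
    · -- confinement
      intro s hs z hz
      rcases Finset.mem_union.1 hs with h | h
      · exact lt_of_lt_of_le haℓ (hTgreg s h z hz).1
      · have hq3ℓ : ℓ < q3.1 := hℓ q3 (hunion q3 hq3R)
        have := hT'conf s h z hz
        linarith

/-- Given `b` blue and `r` red points in general position, there are at most `(2/3)r + 5/3`
closed triangles with pairwise disjoint interiors such that every blue point lies in the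
interior of some triangle and no triangle contains a red point. -/
theorem stmt5 (B R : Finset Pt) (hdisj : Disjoint B R) (hgp : GenPos (B ∪ R)) :
    ∃ T : Finset (Finset Pt),
      (T.card : ℚ) ≤ 2 / 3 * R.card + 5 / 3 ∧
      (∀ s ∈ T, s.card = 3 ∧ ¬ Collinear ℝ (↑s : Set Pt)) ∧
      (∀ s ∈ T, ∀ s' ∈ T, s ≠ s' →
        Disjoint (interior (convexHull ℝ (↑s : Set Pt)))
                 (interior (convexHull ℝ (↑s' : Set Pt)))) ∧
      (∀ p ∈ B, ∃ s ∈ T, p ∈ interior (convexHull ℝ (↑s : Set Pt))) ∧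
      (∀ s ∈ T, ∀ r ∈ R, r ∉ convexHull ℝ (↑s : Set Pt)) := by
  classical
  -- choose a shear parameter making all first coordinates distinct
  obtain ⟨c, hc⟩ : ∃ c : ℝ, ∀ p ∈ B ∪ R, ∀ q ∈ B ∪ R, p ≠ q →
      p.1 + c * p.2 ≠ q.1 + c * q.2 := by
    obtain ⟨c, hc⟩ := Infinite.exists_notMem_finset
      (((B ∪ R) ×ˢ (B ∪ R)).image (fun pq => (pq.2.1 - pq.1.1) / (pq.1.2 - pq.2.2)))
    refine ⟨c, fun p hp q hq hpq he => ?_⟩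
    by_cases hy : p.2 = q.2
    · have hx : p.1 = q.1 := by rw [hy] at he; linarith
      exact hpq (Prod.ext hx hy)
    · apply hc
      refine Finset.mem_image.2 ⟨(p, q), Finset.mem_product.2 ⟨hp, hq⟩, ?_⟩
      have hne : p.2 - q.2 ≠ 0 := sub_ne_zero.2 hy
      field_simp
      linarith
  set f : Pt → Pt := fun z => (z.1 + c * z.2, z.2) with hfdef
  set g : Pt → Pt := fun z => (z.1 - c * z.2, z.2) with hgdef
  have hgf : ∀ z, g (f z) = z := fun z => by simp [hfdef, hgdef]
  have hfg : ∀ z, f (g z) = z := fun z => by simp [hfdef, hgdef]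
  have hfinj : Function.Injective f := Function.LeftInverse.injective hgf
  have hginj : Function.Injective g := Function.LeftInverse.injective hfg
  have hflin : IsLinearMap ℝ f := by
    constructor
    · intro x y; simp [hfdef, Prod.ext_iff]; ring
    · intro r x; simp [hfdef, Prod.ext_iff]; ring
  have hglin : IsLinearMap ℝ g := by
    constructor
    · intro x y; simp [hgdef, Prod.ext_iff]; ring
    · intro r x; simp [hgdef, Prod.ext_iff]; ring
  have hghom : ∀ (X : Set Pt), g '' interior X = interior (g '' X) := by
    have hcont_f : Continuous f := by rw [hfdef]; fun_prop
    have hcont_g : Continuous g := by rw [hgdef]; fun_prop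
    intro X
    exact Homeomorph.image_interior
      { toFun := g, invFun := f, left_inv := hfg, right_inv := hgf,
        continuous_toFun := hcont_g, continuous_invFun := hcont_f } X
  set B' : Finset Pt := B.image f with hB'
  set R' : Finset Pt := R.image f with hR'
  have hmemf : ∀ p ∈ B ∪ R, f p ∈ B' ∪ R' := by
    intro p hp
    rcases Finset.mem_union.1 hp with h | h
    · exact Finset.mem_union_left _ (Finset.mem_image_of_mem f h)
    · exact Finset.mem_union_right _ (Finset.mem_image_of_mem f h)
  have hpre : ∀ p ∈ B' ∪ R', ∃ u ∈ B ∪ R, f u = p := by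
    intro p hp
    rcases Finset.mem_union.1 hp with h | h
    · obtain ⟨u, hu, rfl⟩ := Finset.mem_image.1 h
      exact ⟨u, Finset.mem_union_left _ hu, rfl⟩
    · obtain ⟨u, hu, rfl⟩ := Finset.mem_image.1 h
      exact ⟨u, Finset.mem_union_right _ hu, rfl⟩
  have hℓex : ∃ ℓ : ℝ, ∀ p ∈ B' ∪ R', ℓ < p.1 := by
    by_cases hne : (B' ∪ R').Nonempty
    · refine ⟨((B' ∪ R').image Prod.fst).min' (hne.image _) - 1, fun p hp => ?_⟩
      have : ((B' ∪ R').image Prod.fst).min' (hne.image _) ≤ p.1 :=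
        Finset.min'_le _ _ (Finset.mem_image_of_mem _ hp)
      linarith
    · exact ⟨0, fun p hp => absurd ⟨p, hp⟩ hne⟩
  obtain ⟨ℓ, hℓ⟩ := hℓex
  have hR'card : R'.card = R.card := Finset.card_image_of_injective R hfinj
  obtain ⟨T', hT'count, hT'shape, hT'disj, hT'cover, hT'red, _⟩ :=
    MAIN R.card B' R' ℓ hR'card
      (Finset.disjoint_left.2 (fun s hsB hsR => by
        obtain ⟨u, hu, hu2⟩ := Finset.mem_image.1 hsB
        obtain ⟨v, hv, hv2⟩ := Finset.mem_image.1 hsR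
        have : u = v := hfinj (hu2.trans hv2.symm)
        exact (Finset.disjoint_left.1 hdisj hu) (this ▸ hv)))
      (by
        intro p hp q hq he
        obtain ⟨u, hu, rfl⟩ := hpre p hp
        obtain ⟨v, hv, rfl⟩ := hpre q hq
        by_contra hne
        have huv : u ≠ v := fun h => hne (congrArg f h)
        exact hc u hu v hv huv he)
      (by
        intro p hp q hq hpq z hz
        obtain ⟨u, hu, rfl⟩ := Finset.mem_image.1 hp
        obtain ⟨v, hv, rfl⟩ := Finset.mem_image.1 hq
        obtain ⟨w, hw, rfl⟩ := Finset.mem_image.1 hz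
        intro hdeteq
        have huv : u ≠ v := fun h => hpq (congrArg f h)
        have huw : u ≠ w := fun h => (Finset.disjoint_left.1 hdisj hw) (h ▸ hu)
        have hvw : v ≠ w := fun h => (Finset.disjoint_left.1 hdisj hw) (h ▸ hv)
        apply hgp u (Finset.mem_union_right _ hu) v (Finset.mem_union_right _ hv)
          w (Finset.mem_union_left _ hw) huv (Ne.symm huw.symm) hvw
        apply det_collinear
        simp only [hfdef] at hdeteq
        nlinarith [hdeteq])
      hℓ
  refine ⟨T'.image (fun s => s.image g), ?_, ?_, ?_, ?_, ?_⟩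
  · have h1 : (T'.image (fun s => s.image g)).card ≤ T'.card := Finset.card_image_le
    have h2 : 3 * (T'.image (fun s => s.image g)).card ≤ 2 * R.card + 5 := by omega
    have h3 : (3 : ℚ) * (T'.image (fun s => s.image g)).card ≤ 2 * R.card + 5 := by
      exact_mod_cast h2
    linarith
  · intro s hs
    obtain ⟨s', hs', rfl⟩ := Finset.mem_image.1 hs
    obtain ⟨hcard3, hncol⟩ := hT'shape s' hs'
    refine ⟨by rw [Finset.card_image_of_injective s' hginj, hcard3], ?_⟩
    intro h
    apply hncol
    have := collinear_image hflin h
    rw [Finset.coe_image, ← Set.image_comp] at this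
    simpa [Function.comp, hfg] using this
  · intro s hs s' hs' hne
    obtain ⟨t, ht, rfl⟩ := Finset.mem_image.1 hs
    obtain ⟨t', ht', rfl⟩ := Finset.mem_image.1 hs'
    have htne : t ≠ t' := fun h => hne (by rw [h])
    have hd := hT'disj t ht t' ht' htne
    rw [Finset.coe_image, ← hglin.image_convexHull, Finset.coe_image,
      ← hglin.image_convexHull, ← hghom, ← hghom]
    exact (Set.disjoint_image_iff hginj).2 hd
  · intro p hp
    obtain ⟨s', hs', hmem⟩ := hT'cover (f p) (Finset.mem_image_of_mem f hp)
    refine ⟨s'.image g, Finset.mem_image_of_mem _ hs', ?_⟩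
    rw [Finset.coe_image, ← hglin.image_convexHull, ← hghom]
    exact ⟨f p, hmem, hgf p⟩
  · intro s hs r hr hmem
    obtain ⟨s', hs', rfl⟩ := Finset.mem_image.1 hs
    rw [Finset.coe_image, ← hglin.image_convexHull] at hmem
    obtain ⟨w, hw, hwr⟩ := hmem
    have : w = f r := by rw [← hfg w, hwr]
    rw [this] at hw
    exact hT'red s' hs' (f r) (Finset.mem_image_of_mem f hr) hw
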